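/- arXiv:1009.2229 — 2 statements merged into one kernel-verified Lean document; each statement's English description precedes it below -/
import Mathlib

section
/- Let R be a Noetherian ring and M an Artinian R-module such that Ann_R(0 :_M p) = p for every prime p ⊇ Ann_R(M). Then for every ideal I of R, Cos_R(0 :_M I) = Cos_R(M) ∩ V(I), where Cos denotes co-support and V(I) the primes containing I. -/
/-- Artinian modules are "linearly compact": a downward-directed family of nonempty
cosets of submodules has nonempty intersection. -/
lemma sInter_nonempty_of_directed_cosets' {R W : Type*} [CommRing R] [AddCommGroup W]
    [Module R W] [IsArtinian R W] (C : Set (Set W))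
    (hcoset : ∀ c ∈ C, ∃ (V : Submodule R W) (a : W), c = (a + ·) '' (V : Set W))
    (hdir : ∀ c₁ ∈ C, ∀ c₂ ∈ C, ∃ c₃ ∈ C, c₃ ⊆ c₁ ∩ c₂)
    (hne : C.Nonempty) : (⋂₀ C).Nonempty := by
  classical
  set 𝒱 : Set (Submodule R W) := {V | ∃ a, (a + ·) '' (V : Set W) ∈ C} with h𝒱
  have h𝒱ne : 𝒱.Nonempty := by
    obtain ⟨c, hc⟩ := hne
    obtain ⟨V, a, rfl⟩ := hcoset c hc
    exact ⟨V, a, hc⟩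
  obtain ⟨Vs, hVs, hmin⟩ := IsArtinian.set_has_minimal 𝒱 h𝒱ne
  obtain ⟨as, hCs⟩ := hVs
  refine ⟨as, ?_⟩
  intro c hc
  obtain ⟨c₃, hc₃, hsub⟩ := hdir _ hCs c hc
  obtain ⟨V₃, a₃, rfl⟩ := hcoset c₃ hc₃
  have ha₃mem : a₃ ∈ (a₃ + ·) '' (V₃ : Set W) := ⟨0, V₃.zero_mem, by simp⟩
  obtain ⟨w₂, hw₂, hw₂e⟩ := (hsub ha₃mem).1
  -- hw₂e : as + w₂ = a₃
  have hV₃le : V₃ ≤ Vs := by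
    intro v hv
    obtain ⟨w₁, hw₁, hw₁e⟩ := (hsub ⟨v, hv, rfl⟩).1
    -- hw₁e : as + w₁ = a₃ + v
    have hveq : v = w₁ - w₂ := by
      have h1 : as + w₁ = a₃ + v := hw₁e
      have h2 : as + w₂ = a₃ := hw₂e
      rw [← h2, add_assoc] at h1
      have h3 := add_left_cancel h1.symm
      exact eq_sub_of_add_eq' h3
    rw [hveq]; exact Vs.sub_mem hw₁ hw₂
  have hV₃eq : V₃ = Vs := by
    rcases lt_or_eq_of_le hV₃le with hlt | heq
    · exact absurd hlt (hmin V₃ ⟨a₃, hc₃⟩)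
    · exact heq
  have hasmem : as ∈ (a₃ + ·) '' (V₃ : Set W) := by
    refine ⟨-w₂, neg_mem (hV₃eq ▸ hw₂ : w₂ ∈ V₃), ?_⟩
    show a₃ + -w₂ = as
    have h2 : as + w₂ = a₃ := hw₂e
    rw [← h2]; abel
  exact (hsub hasmem).2

lemma exists_compatible_family' {R W : Type*} [CommRing R] [AddCommGroup W] [Module R W]
    [IsArtinian R W] (S : Submonoid R) (N₀ : Submodule R W)
    (hdiv : ∀ s : S, ∀ y ∈ N₀, ∃ z ∈ N₀, (s : R) • z = y)
    (hkill : ∀ r : R, (∃ s : S, (s : R) * r = 0) → ∀ y : W, r • y = 0)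
    (x : W) (hx : x ∈ N₀) :
    ∃ g : S → W, g 1 = x ∧ ∀ s t : S, (t : R) • g (s * t) = g s := by
  classical
  -- solution sets of finite systems of congruences together with finitely many pins
  set Sol : Finset (S × S) → Finset (S × W) → Set (S → W) := fun F K =>
    {g | (∀ e, g e ∈ N₀) ∧ (∀ q ∈ F, (q.2 : R) • g (q.1 * q.2) = g q.1) ∧ g 1 = x ∧
      ∀ q ∈ K, g q.1 = q.2} with hSol
  -- base solvability : without pins every finite system is solvable
  have base : ∀ F : Finset (S × S), ∃ g : S → W, (∀ e, g e ∈ N₀) ∧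
      (∀ q ∈ F, (q.2 : R) • g (q.1 * q.2) = g q.1) ∧ g 1 = x := by
    intro F
    set T : Finset S := insert 1 (F.image Prod.fst ∪ F.image (fun q => q.1 * q.2)) with hT
    set u : S := T.prod id with hu
    obtain ⟨y, hyN, hyu⟩ := hdiv u x hx
    set d : S → R := fun e => (T.erase e).prod (fun a => (a : R)) with hd
    have hcoeprod : ∀ T' : Finset S, ((T'.prod id : S) : R) = T'.prod (fun a => (a : R)) := by
      intro T'
      exact map_prod S.subtype id T'
    have hdmul : ∀ e ∈ T, (e : R) * d e = (u : R) := by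
      intro e he
      rw [hcoeprod, hd]
      exact Finset.mul_prod_erase T _ he
    refine ⟨fun e => if e ∈ T then d e • y else 0, ?_, ?_, ?_⟩
    · intro e
      by_cases he : e ∈ T
      · simp only [he, if_true]; exact N₀.smul_mem _ hyN
      · simp only [he, if_false]; exact N₀.zero_mem
    · rintro ⟨s, t⟩ hq
      have hsT : s ∈ T := by
        rw [hT]
        exact Finset.mem_insert_of_mem (Finset.mem_union_left _
          (Finset.mem_image.mpr ⟨(s, t), hq, rfl⟩))
      have hstT : s * t ∈ T := by
        rw [hT]
        exact Finset.mem_insert_of_mem (Finset.mem_union_right _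
          (Finset.mem_image.mpr ⟨(s, t), hq, rfl⟩))
      simp only [hsT, hstT, if_true]
      rw [smul_smul, ← sub_eq_zero, ← sub_smul]
      refine hkill _ ⟨s, ?_⟩ y
      have h1 : (s : R) * ((t : R) * d (s * t)) = (u : R) := by
        rw [← mul_assoc, ← Submonoid.coe_mul]
        exact hdmul _ hstT
      have h2 : (s : R) * d s = (u : R) := hdmul _ hsT
      rw [mul_sub, h1, h2, sub_self]
    · have h1T : (1 : S) ∈ T := Finset.mem_insert_self _ _
      simp only [h1T, if_true]
      have : ((1 : S) : R) * d 1 = (u : R) := hdmul _ h1T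
      rw [OneMemClass.coe_one, one_mul] at this
      rw [this]
      exact hyu
  -- the invariant for Zorn's lemma
  set Inv : Set (S × W) → Prop := fun K =>
    ∀ (F : Finset (S × S)) (K₀ : Finset (S × W)), ↑K₀ ⊆ K → (Sol F K₀).Nonempty with hInv
  have hInvEmpty : Inv ∅ := by
    intro F K₀ hK₀
    obtain ⟨g, hg1, hg2, hg3⟩ := base F
    exact ⟨g, hg1, hg2, hg3, fun q hq => absurd (hK₀ hq) (Set.notMem_empty q)⟩
  obtain ⟨Kstar, -, hKstarmax⟩ := zorn_subset_nonempty {K | Inv K} (by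
      intro c hc hchain hcne
      refine ⟨⋃₀ c, ?_, fun s hs => Set.subset_sUnion_of_mem hs⟩
      intro F K₀ hK₀
      -- a finite subset of the union of a chain lies in one member
      have : ∃ k ∈ c, ↑K₀ ⊆ k := by
        clear hSol hInv hInvEmpty base
        induction K₀ using Finset.induction_on with
        | empty =>
          obtain ⟨k, hk⟩ := hcne
          exact ⟨k, hk, by simp⟩
        | @insert q K₁ hnotmem ih =>
          have hsub : ↑K₁ ⊆ ⋃₀ c :=
            fun e he => hK₀ (Finset.mem_coe.mpr (Finset.mem_insert_of_mem he))
          obtain ⟨k, hkc, hk⟩ := ih hsub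
          have hq : q ∈ ⋃₀ c := hK₀ (by simp)
          obtain ⟨k', hk'c, hqk'⟩ := hq
          rcases hchain.total hkc hk'c with hle | hle
          · exact ⟨k', hk'c, by
              rw [Finset.coe_insert]
              exact Set.insert_subset hqk' (hk.trans hle)⟩
          · exact ⟨k, hkc, by
              rw [Finset.coe_insert]
              exact Set.insert_subset (hle hqk') hk⟩
      obtain ⟨k, hkc, hk⟩ := this
      exact hc hkc F K₀ hk) ∅ hInvEmpty
  have hKstar : Inv Kstar := hKstarmax.prop
  -- every coordinate can be pinned
  have total : ∀ s : S, ∃ w : W, (s, w) ∈ Kstar := by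
    intro s
    set C : Set (Set W) := {c | ∃ (F : Finset (S × S)) (K₀ : Finset (S × W)),
      ↑K₀ ⊆ Kstar ∧ c = (fun g : S → W => g s) '' Sol F K₀} with hC
    have hcoset : ∀ c ∈ C, ∃ (V : Submodule R W) (a : W), c = (a + ·) '' (V : Set W) := by
      rintro c ⟨F, K₀, hK₀, rfl⟩
      obtain ⟨a, ha⟩ := hKstar F K₀ hK₀
      set V0 : Submodule R (S → W) :=
        { carrier := {g | (∀ e, g e ∈ N₀) ∧ (∀ q ∈ F, (q.2 : R) • g (q.1 * q.2) = g q.1) ∧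
            g 1 = 0 ∧ ∀ q ∈ K₀, g q.1 = 0}
          add_mem' := by
            rintro g h ⟨hg1, hg2, hg3, hg4⟩ ⟨hh1, hh2, hh3, hh4⟩
            refine ⟨fun e => N₀.add_mem (hg1 e) (hh1 e), fun q hq => ?_, by
              simp [Pi.add_apply, hg3, hh3], fun q hq => by
              simp [Pi.add_apply, hg4 q hq, hh4 q hq]⟩
            simp [Pi.add_apply, smul_add, hg2 q hq, hh2 q hq]
          zero_mem' := ⟨fun e => N₀.zero_mem, fun q hq => by simp, rfl, fun q hq => rfl⟩
          smul_mem' := by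
            rintro r g ⟨hg1, hg2, hg3, hg4⟩
            refine ⟨fun e => N₀.smul_mem r (hg1 e), fun q hq => ?_, by
              simp [Pi.smul_apply, hg3], fun q hq => by simp [Pi.smul_apply, hg4 q hq]⟩
            simp only [Pi.smul_apply]
            rw [smul_comm, hg2 q hq] } with hV0
      refine ⟨V0.map (LinearMap.proj s), a s, ?_⟩
      ext w
      constructor
      · rintro ⟨g, hg, rfl⟩
        refine ⟨(g - a) s, ⟨g - a, ?_, rfl⟩, ?_⟩
        · obtain ⟨hg1, hg2, hg3, hg4⟩ := hg
          obtain ⟨ha1, ha2, ha3, ha4⟩ := ha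
          refine ⟨fun e => N₀.sub_mem (hg1 e) (ha1 e), fun q hq => ?_, by
            simp [Pi.sub_apply, hg3, ha3], fun q hq => by
            simp [Pi.sub_apply, hg4 q hq, ha4 q hq]⟩
          simp [Pi.sub_apply, smul_sub, hg2 q hq, ha2 q hq]
        · show a s + (g - a) s = g s
          simp [Pi.sub_apply]
      · rintro ⟨w', ⟨v, hv, rfl⟩, rfl⟩
        refine ⟨a + v, ?_, ?_⟩
        · obtain ⟨hv1, hv2, hv3, hv4⟩ := hv
          obtain ⟨ha1, ha2, ha3, ha4⟩ := ha
          refine ⟨fun e => N₀.add_mem (ha1 e) (hv1 e), fun q hq => ?_, by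
            simp [Pi.add_apply, hv3, ha3], fun q hq => by
            simp [Pi.add_apply, hv4 q hq, ha4 q hq]⟩
          simp [Pi.add_apply, smul_add, hv2 q hq, ha2 q hq]
        · show (a + v) s = a s + (LinearMap.proj s) v
          simp [Pi.add_apply]
    have hdir : ∀ c₁ ∈ C, ∀ c₂ ∈ C, ∃ c₃ ∈ C, c₃ ⊆ c₁ ∩ c₂ := by
      rintro c₁ ⟨F₁, K₁, hK₁, rfl⟩ c₂ ⟨F₂, K₂, hK₂, rfl⟩
      refine ⟨_, ⟨F₁ ∪ F₂, K₁ ∪ K₂, by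
        rw [Finset.coe_union]; exact Set.union_subset hK₁ hK₂, rfl⟩, ?_⟩
      have hmono : ∀ (Fa Fb : Finset (S × S)) (Ka Kb : Finset (S × W)),
          Fa ⊆ Fb → Ka ⊆ Kb → Sol Fb Kb ⊆ Sol Fa Ka := by
        rintro Fa Fb Ka Kb hF hK g ⟨h1, h2, h3, h4⟩
        exact ⟨h1, fun q hq => h2 q (hF hq), h3, fun q hq => h4 q (hK hq)⟩
      intro w hw
      obtain ⟨g, hg, rfl⟩ := hw
      exact ⟨⟨g, hmono F₁ _ K₁ _ Finset.subset_union_left Finset.subset_union_left hg, rfl⟩,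
        ⟨g, hmono F₂ _ K₂ _ Finset.subset_union_right Finset.subset_union_right hg, rfl⟩⟩
    have hCne : C.Nonempty := ⟨_, ∅, ∅, by simp, rfl⟩
    obtain ⟨w, hw⟩ := sInter_nonempty_of_directed_cosets' C hcoset hdir hCne
    refine ⟨w, ?_⟩
    -- show Inv (insert (s, w) Kstar), then use maximality
    have hInvIns : Inv (insert (s, w) Kstar) := by
      intro F K₀ hK₀
      set K₁ : Finset (S × W) := K₀.filter (fun q => q ≠ (s, w)) with hK₁
      have hK₁sub : ↑K₁ ⊆ Kstar := by
        intro q hq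
        rw [hK₁] at hq
        simp only [Finset.coe_filter, Set.mem_setOf_eq] at hq
        rcases hK₀ hq.1 with h | h
        · exact absurd h hq.2
        · exact h
      have hwC : w ∈ (fun g : S → W => g s) '' Sol F K₁ :=
        hw _ ⟨F, K₁, hK₁sub, rfl⟩
      obtain ⟨g, ⟨hg1, hg2, hg3, hg4⟩, hgs⟩ := hwC
      refine ⟨g, hg1, hg2, hg3, fun q hq => ?_⟩
      by_cases hqe : q = (s, w)
      · subst hqe; exact hgs
      · exact hg4 q (Finset.mem_filter.mpr ⟨hq, hqe⟩)
    have heq := hKstarmax.eq_of_subset hInvIns (Set.subset_insert _ _)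
    rw [heq]
    exact Set.mem_insert _ _
  set g : S → W := fun s => Classical.choose (total s) with hg
  have hgmem : ∀ s : S, (s, g s) ∈ Kstar := fun s => Classical.choose_spec (total s)
  refine ⟨g, ?_, ?_⟩
  · obtain ⟨g', ⟨-, -, hg'1, hg'pin⟩⟩ := hKstar ∅ {(1, g 1)} (by
      simp only [Finset.coe_singleton, Set.singleton_subset_iff]; exact hgmem 1)
    have := hg'pin (1, g 1) (Finset.mem_singleton_self _)
    simp only at this
    rw [← this, hg'1]
  · intro s t
    obtain ⟨g', ⟨-, hg'rel, -, hg'pin⟩⟩ := hKstar {(s, t)} {(s, g s), (s * t, g (s * t))} (by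
      intro q hq
      simp only [Finset.coe_insert, Finset.coe_singleton, Set.mem_insert_iff,
        Set.mem_singleton_iff] at hq
      rcases hq with rfl | rfl
      · exact hgmem s
      · exact hgmem (s * t))
    have h1 := hg'pin (s, g s) (by simp)
    have h2 := hg'pin (s * t, g (s * t)) (by simp)
    have h3 := hg'rel (s, t) (by simp)
    simp only at h1 h2 h3
    rw [← h1, ← h2, h3]


lemma exists_linearMap_of_compatible' {R : Type*} [CommRing R] (S : Submonoid R)
    {W : Type*} [AddCommGroup W] [Module R W] (g : S → W)
    (hrel : ∀ s t : S, (t : R) • g (s * t) = g s)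
    (hkill : ∀ r : R, (∃ s : S, (s : R) * r = 0) → ∀ y : W, r • y = 0) :
    ∃ f : Localization S →ₗ[R] W, f 1 = g 1 := by
  have key : ∀ (a c : R) (b d : S), Localization.r S (a, b) (c, d) → a • g b = c • g d := by
    intro a c b d hr
    obtain ⟨e, he⟩ := Localization.r_iff_exists.mp hr
    simp only at he
    have h1 : g b = (d : R) • g (b * d) := (hrel b d).symm
    have h2 : g d = (b : R) • g (d * b) := (hrel d b).symm
    rw [h1, h2, mul_comm d b, smul_smul, smul_smul, ← sub_eq_zero, ← sub_smul]
    refine hkill _ ⟨e, ?_⟩ _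
    linear_combination he
  set F : Localization S → W := fun z =>
    Localization.liftOn z (fun r s => r • g s) (fun {a c b d} h => key a c b d h) with hF
  have hFmk : ∀ (a : R) (b : S), F (Localization.mk a b) = a • g b := fun a b => rfl
  refine ⟨{ toFun := F, map_add' := ?_, map_smul' := ?_ }, ?_⟩
  · intro z₁ z₂
    induction z₁ using Localization.induction_on with | _ p =>
    induction z₂ using Localization.induction_on with | _ q =>
    obtain ⟨a, b⟩ := p
    obtain ⟨c, d⟩ := q
    rw [Localization.add_mk, hFmk, hFmk, hFmk]
    have h1 : g b = (d : R) • g (b * d) := (hrel b d).symm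
    have h2 : g d = (b : R) • g (d * b) := (hrel d b).symm
    rw [h1, h2, mul_comm d b, smul_smul, smul_smul, ← add_smul]
    congr 1
    push_cast
    ring
  · intro r z
    induction z using Localization.induction_on with | _ p =>
    obtain ⟨a, b⟩ := p
    show F (r • Localization.mk a b) = r • F (Localization.mk a b)
    rw [Localization.smul_mk, hFmk, hFmk, smul_eq_mul, mul_smul]
  · show F 1 = g 1
    rw [← Localization.mk_one, hFmk, one_smul]

lemma hom_eq_zero_of_unit_kill {R : Type*} [CommRing R] {N : Type*} [AddCommGroup N]
    [Module R N] (p : Ideal R) [p.IsPrime]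
    (f : Localization.AtPrime p →ₗ[R] N) {a : R} (ha : a ∉ p)
    (hann : ∀ n : N, a • n = 0) : f = 0 := by
  have haS : a ∈ p.primeCompl := ha
  ext y
  have hy : a • ((Localization.mk 1 ⟨a, haS⟩) * y) = y := by
    rw [← smul_mul_assoc, Localization.smul_mk, smul_eq_mul, mul_one,
      Localization.mk_self ⟨a, haS⟩, one_mul]
  rw [LinearMap.zero_apply, ← hy, map_smul, hann]

/-- The co-support of an `R`-module `N`: primes `p` with `Hom_R(R_p, N) ≠ 0`. -/
def coSupport (R : Type*) [CommRing R] (N : Type*) [AddCommGroup N] [Module R N] :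
    Set (PrimeSpectrum R) :=
  {p | Nontrivial (Localization.AtPrime p.asIdeal →ₗ[R] N)}

/-- Let `R` be a Noetherian ring and `M` an Artinian `R`-module such that
`Ann_R(0 :_M p) = p` for every prime `p ⊇ Ann_R(M)`. Then for every ideal `I` of `R`,
`Cos_R(0 :_M I) = Cos_R(M) ∩ V(I)`. -/
theorem coSupport_torsionBySet_eq
    (R M : Type*) [CommRing R] [IsNoetherianRing R]
    [AddCommGroup M] [Module R M] [IsArtinian R M]
    (h : ∀ p : Ideal R, p.IsPrime → Module.annihilator R M ≤ p →
      (Submodule.torsionBySet R M (p : Set R)).annihilator = p) :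
    ∀ I : Ideal R,
      coSupport R (Submodule.torsionBySet R M (I : Set R))
        = coSupport R M ∩ {p : PrimeSpectrum R | I ≤ p.asIdeal} := by
  intro I
  ext p
  simp only [coSupport, Set.mem_setOf_eq, Set.mem_inter_iff]
  constructor
  · intro hmem
    obtain ⟨f, hf⟩ := @exists_ne _ hmem
      (0 : Localization.AtPrime p.asIdeal →ₗ[R] ↥(Submodule.torsionBySet R M (I : Set R)))
    constructor
    · have hcomp : (Submodule.torsionBySet R M (I : Set R)).subtype ∘ₗ f ≠ 0 := by
        intro h0
        apply hf
        ext y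
        have := congrFun (congrArg DFunLike.coe h0) y
        simp only [LinearMap.comp_apply, Submodule.subtype_apply, LinearMap.zero_apply] at this ⊢
        simpa using this
      exact nontrivial_of_ne _ 0 hcomp
    · by_contra hIp
      obtain ⟨a, haI, hap⟩ := SetLike.not_le_iff_exists.mp hIp
      apply hf
      apply hom_eq_zero_of_unit_kill p.asIdeal f hap
      intro n
      have h0 := (Submodule.mem_torsionBySet_iff (I : Set R) (n : M)).mp n.2 ⟨a, haI⟩
      exact Subtype.ext h0
  · rintro ⟨hM, hIp⟩
    obtain ⟨f, hf⟩ := @exists_ne _ hM (0 : Localization.AtPrime p.asIdeal →ₗ[R] M)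
    have hann : Module.annihilator R M ≤ p.asIdeal := by
      intro a ha
      by_contra hap
      exact hf (hom_eq_zero_of_unit_kill p.asIdeal f hap
        (fun n => Module.mem_annihilator.mp ha n))
    have hW := h p.asIdeal p.isPrime hann
    set W : Submodule R M := Submodule.torsionBySet R M (p.asIdeal : Set R) with hWdef
    set S : Submonoid R := p.asIdeal.primeCompl with hSdef
    have hkill : ∀ r : R, (∃ s : S, (s : R) * r = 0) → ∀ y : ↥W, r • y = 0 := by
      rintro r ⟨s, hs⟩ y
      have h0 : (s : R) * r ∈ p.asIdeal := hs ▸ p.asIdeal.zero_mem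
      have hrp : r ∈ p.asIdeal := by
        rcases p.isPrime.mem_or_mem h0 with h' | h'
        · exact absurd h' s.2
        · exact h'
      exact Subtype.ext ((Submodule.mem_torsionBySet_iff _ _).mp y.2 ⟨r, hrp⟩)
    have hlsmul : ∀ r r' : R, (LinearMap.lsmul R ↥W r).comp (LinearMap.lsmul R ↥W r')
        = LinearMap.lsmul R ↥W (r * r') :=
      fun r r' => LinearMap.ext fun z => (mul_smul r r' z).symm
    obtain ⟨N₀, hN₀mem, hmin⟩ := IsArtinian.set_has_minimal
      (Set.range (fun s : S => Submodule.map (LinearMap.lsmul R ↥W (s : R)) ⊤))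
      ⟨_, ⟨1, rfl⟩⟩
    obtain ⟨s₀, hs₀⟩ := hN₀mem
    have hstable : ∀ s : S, Submodule.map (LinearMap.lsmul R ↥W (s : R)) N₀ = N₀ := by
      intro s
      have h1 : Submodule.map (LinearMap.lsmul R ↥W (s : R)) N₀
          = Submodule.map (LinearMap.lsmul R ↥W ((s * s₀ : S) : R)) ⊤ := by
        rw [← hs₀, ← Submodule.map_comp, hlsmul]
        push_cast
        rfl
      have h2 : Submodule.map (LinearMap.lsmul R ↥W ((s * s₀ : S) : R)) ⊤ ≤ N₀ := by
        rw [← hs₀]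
        have : ((s * s₀ : S) : R) = (s₀ : R) * (s : R) := by push_cast; ring
        rw [this, ← hlsmul, Submodule.map_comp]
        exact Submodule.map_mono le_top
      rw [h1]
      rcases lt_or_eq_of_le h2 with hlt | heq
      · exact absurd hlt (hmin _ ⟨s * s₀, rfl⟩)
      · exact heq
    have hdiv : ∀ s : S, ∀ y ∈ N₀, ∃ z ∈ N₀, (s : R) • z = y := by
      intro s y hy
      rw [← hstable s] at hy
      obtain ⟨z, hz, hze⟩ := hy
      exact ⟨z, hz, hze⟩
    have hbot : N₀ ≠ ⊥ := by
      intro h0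
      have hs₀ann : (s₀ : R) ∈ W.annihilator := by
        rw [Submodule.mem_annihilator]
        intro n hn
        have : (s₀ : R) • (⟨n, hn⟩ : ↥W) ∈ N₀ := by
          rw [← hs₀]
          exact ⟨⟨n, hn⟩, trivial, rfl⟩
        rw [h0, Submodule.mem_bot] at this
        have := congrArg (Subtype.val) this
        simpa using this
      rw [hW] at hs₀ann
      exact s₀.2 hs₀ann
    obtain ⟨x, hxN, hxne⟩ := Submodule.exists_mem_ne_zero_of_ne_bot hbot
    obtain ⟨g, hg1, hgrel⟩ := exists_compatible_family' S N₀ hdiv hkill x hxN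
    obtain ⟨f₀, hf₀⟩ := exists_linearMap_of_compatible' S g hgrel hkill
    have hle2 : W ≤ Submodule.torsionBySet R M (I : Set R) := by
      rw [hWdef]
      exact Submodule.torsionBySet_le_torsionBySet_of_subset (fun r hr => hIp hr)
    refine nontrivial_of_ne ((Submodule.inclusion hle2).comp f₀) 0 ?_
    intro h0
    apply hxne
    have h1 := congrFun (congrArg DFunLike.coe h0) 1
    simp only [LinearMap.comp_apply, LinearMap.zero_apply] at h1
    rw [hf₀, hg1] at h1
    have h2 := congrArg Subtype.val h1
    simp only [Submodule.coe_inclusion, ZeroMemClass.coe_zero] at h2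
    exact Subtype.ext h2
end

section
/- Let R be a Noetherian ring, M an Artinian R-module, and p a prime in the co-support of M. If every attached prime of M contained in p equals p itself, then the co-localized module Hom_R(R_p, M) has Att_{R_p}(Hom_R(R_p, M)) = {pR_p}, and hence its co-dimension over R_p is zero. -/
/-- `p` is an attached prime of `M` iff `p` is prime and is the annihilator of some quotient
of `M`. -/
def IsAttachedPrime (R : Type*) [CommRing R] (M : Type*) [AddCommGroup M] [Module R M]
    (p : Ideal R) : Prop :=
  p.IsPrime ∧ ∃ N : Submodule R M, Module.annihilator R (M ⧸ N) = p

/-- The co-dimension of an `R`-module `N`: `sup {dim R/p | p ∈ Cos_R N}`. -/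
noncomputable def coDim (R : Type*) [CommRing R] (N : Type*) [AddCommGroup N] [Module R N] :
    WithBot (WithTop ℕ) :=
  sSup ((fun p : PrimeSpectrum R => ringKrullDim (R ⧸ p.asIdeal)) '' coSupport R N)

section

variable {R : Type*} [CommRing R] {M : Type*} [AddCommGroup M] [Module R M]
  (p : Ideal R) [p.IsPrime]

/-- The `R_p`-module structure on the co-localization `Hom_R(R_p, M)`, where `a ∈ R_p` acts by
precomposition with multiplication by `a`. -/
noncomputable instance colocalizationModule :
    Module (Localization.AtPrime p) (Localization.AtPrime p →ₗ[R] M) where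
  smul a f := f.comp (LinearMap.mulLeft R a)
  one_smul f := LinearMap.ext fun y => by show f (1 * y) = f y; rw [one_mul]
  mul_smul a b f := LinearMap.ext fun y => by
    show f (a * b * y) = f (b * (a * y)); congr 1; ring
  smul_zero a := LinearMap.ext fun y => rfl
  smul_add a f g := LinearMap.ext fun y => rfl
  add_smul a b f := LinearMap.ext fun y => by
    show f ((a + b) * y) = f (a * y) + f (b * y); rw [add_mul, map_add]
  zero_smul f := LinearMap.ext fun y => by
    show f (0 * y) = 0; rw [zero_mul, map_zero]

end



section AuxAttached

variable {R : Type*} [CommRing R] {M : Type*} [AddCommGroup M] [Module R M]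

lemma annihilator_congr {A B : Type*} [AddCommGroup A] [AddCommGroup B] [Module R A]
    [Module R B] (e : A ≃ₗ[R] B) : Module.annihilator R A = Module.annihilator R B := by
  ext r
  simp only [Module.mem_annihilator]
  constructor
  · intro h b
    have : r • e (e.symm b) = e (r • e.symm b) := (map_smul e r _).symm
    rw [e.apply_symm_apply] at this
    rw [this, h, map_zero]
  · intro h a
    apply e.injective
    rw [map_smul, h, map_zero]

lemma mem_ann_quot {N : Submodule R M} {r : R} :
    r ∈ Module.annihilator R (M ⧸ N) ↔ ∀ x : M, r • x ∈ N := by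
  rw [Module.mem_annihilator]
  constructor
  · intro h x
    have := h (Submodule.Quotient.mk x)
    rwa [← Submodule.Quotient.mk_smul, Submodule.Quotient.mk_eq_zero] at this
  · intro h z
    obtain ⟨x, rfl⟩ := Submodule.Quotient.mk_surjective N z
    rw [← Submodule.Quotient.mk_smul, Submodule.Quotient.mk_eq_zero]
    exact h x

/-- Every nonzero module over a Noetherian ring has an attached prime: a maximal member of the
set of annihilators of nonzero quotients is prime. -/
lemma exists_isAttachedPrime [IsNoetherianRing R] (h : Nontrivial M) :
    ∃ P, IsAttachedPrime R M P := by
  classical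
  set 𝒮 : Set (Ideal R) := {I | ∃ N : Submodule R M, N ≠ ⊤ ∧ Module.annihilator R (M ⧸ N) = I}
    with h𝒮
  have hne : 𝒮.Nonempty := ⟨_, ⊥, bot_ne_top, rfl⟩
  obtain ⟨I, hI𝒮, hImax⟩ := set_has_maximal_iff_noetherian.mpr ‹IsNoetherianRing R› 𝒮 hne
  obtain ⟨N, hNtop, hann⟩ := hI𝒮
  have hne_top : I ≠ ⊤ := by
    intro hIT
    apply hNtop
    rw [Submodule.eq_top_iff']
    intro x
    have h1 : (1 : R) ∈ Module.annihilator R (M ⧸ N) := by rw [hann, hIT]; trivial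
    have := mem_ann_quot.mp h1 x
    rwa [one_smul] at this
  refine ⟨I, ⟨⟨hne_top, ?_⟩, N, hann⟩⟩
  intro a b hab
  by_contra hcon
  push_neg at hcon
  obtain ⟨ha, hb⟩ := hcon
  set Na : Submodule R M := N.comap (LinearMap.lsmul R M a) with hNa
  have hNaT : Na ≠ ⊤ := by
    intro hT
    apply ha
    rw [← hann]
    rw [mem_ann_quot]
    intro x
    have : x ∈ Na := hT ▸ Submodule.mem_top
    exact this
  have hsub : I ≤ Module.annihilator R (M ⧸ Na) := by
    intro r hr
    rw [mem_ann_quot]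
    intro x
    have hx : r • x ∈ N := mem_ann_quot.mp (hann ▸ hr) x
    show a • (r • x) ∈ N
    exact N.smul_mem a hx
  have hbmem : b ∈ Module.annihilator R (M ⧸ Na) := by
    rw [mem_ann_quot]
    intro x
    show a • (b • x) ∈ N
    rw [smul_smul]
    exact mem_ann_quot.mp (hann ▸ hab) x
  have : ¬ I < Module.annihilator R (M ⧸ Na) := hImax _ ⟨Na, hNaT, rfl⟩
  have : I = Module.annihilator R (M ⧸ Na) := le_antisymm hsub (by
    by_contra hn
    exact this (lt_of_le_of_ne hsub (fun he => hn (he ▸ le_refl _))))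
  exact hb (this ▸ hbmem)

end AuxAttached


section AuxSec

variable {R : Type*} [CommRing R] {M : Type*} [AddCommGroup M] [Module R M]

/-- `S` is a secondary submodule: nonzero, and each `r : R` acts on it either surjectively or
nilpotently. -/
def IsSec (R : Type*) [CommRing R] {M : Type*} [AddCommGroup M] [Module R M]
    (S : Submodule R M) : Prop :=
  S ≠ ⊥ ∧ ∀ r : R, S.map (LinearMap.lsmul R M r) = S ∨
    ∃ n : ℕ, S.map (LinearMap.lsmul R M (r ^ n)) = ⊥

lemma map_lsmul_le (r : R) (S : Submodule R M) : S.map (LinearMap.lsmul R M r) ≤ S := by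
  rintro x ⟨y, hy, rfl⟩
  exact S.smul_mem r hy

lemma map_lsmul_mul (r s : R) (S : Submodule R M) :
    S.map (LinearMap.lsmul R M (r * s)) = (S.map (LinearMap.lsmul R M s)).map
      (LinearMap.lsmul R M r) := by
  have h : LinearMap.lsmul R M (r * s) = (LinearMap.lsmul R M r).comp (LinearMap.lsmul R M s) := by
    ext x
    simp only [LinearMap.lsmul_apply, LinearMap.coe_comp, Function.comp_apply]
    rw [mul_smul]
  rw [h, Submodule.map_comp]

/-- A sum-irreducible Artinian submodule is secondary. -/
lemma isSec_of_irred [IsArtinian R M] (S : Submodule R M) (hbot : S ≠ ⊥)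
    (hirr : ∀ A B : Submodule R M, A ⊔ B = S → A = S ∨ B = S) : IsSec R S := by
  refine ⟨hbot, fun r => ?_⟩
  have hmono : ∀ k l : ℕ, k ≤ l →
      S.map (LinearMap.lsmul R M (r ^ l)) ≤ S.map (LinearMap.lsmul R M (r ^ k)) := by
    intro k l hkl
    obtain ⟨d, rfl⟩ := Nat.exists_eq_add_of_le hkl
    rw [pow_add, map_lsmul_mul]
    exact Submodule.map_mono (map_lsmul_le _ _)
  set f : ℕ →o (Submodule R M)ᵒᵈ :=
    ⟨fun n => OrderDual.toDual (S.map (LinearMap.lsmul R M (r ^ n))), fun k l hkl => hmono k l hkl⟩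
    with hf
  obtain ⟨n₀, hstab⟩ := IsArtinian.monotone_stabilizes f
  set n : ℕ := n₀ + 1 with hn
  have hkey : S.map (LinearMap.lsmul R M (r ^ n)) = S.map (LinearMap.lsmul R M (r ^ (2 * n))) := by
    have h1 : f n₀ = f n := hstab n (by omega)
    have h2 : f n₀ = f (2 * n) := hstab (2 * n) (by omega)
    have := h1.symm.trans h2
    exact congrArg OrderDual.ofDual this
  have hdecomp : S.map (LinearMap.lsmul R M (r ^ n)) ⊔
      (S ⊓ LinearMap.ker (LinearMap.lsmul R M (r ^ n))) = S := by
    apply le_antisymm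
    · exact sup_le (map_lsmul_le _ _) inf_le_left
    · intro x hx
      have hrx : (r ^ n) • x ∈ S.map (LinearMap.lsmul R M (r ^ (2 * n))) := by
        rw [← hkey]
        exact ⟨x, hx, rfl⟩
      obtain ⟨y, hy, hyx⟩ := hrx
      refine Submodule.mem_sup.mpr ⟨(r ^ n) • y, ⟨y, hy, rfl⟩, x - (r ^ n) • y,
        ⟨S.sub_mem hx (S.smul_mem _ hy), ?_⟩, add_sub_cancel _ _⟩
      show (LinearMap.lsmul R M (r ^ n)) (x - (r ^ n) • y) = 0
      have hyx' : (r ^ (2 * n)) • y = (r ^ n) • x := hyx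
      rw [LinearMap.lsmul_apply, smul_sub, smul_smul, ← pow_add,
        show n + n = 2 * n by ring, hyx']
      exact sub_self _
  rcases hirr _ _ hdecomp with h1 | h2
  · left
    apply le_antisymm (map_lsmul_le _ _)
    calc S = S.map (LinearMap.lsmul R M (r ^ n)) := h1.symm
      _ ≤ S.map (LinearMap.lsmul R M r) := by
          rw [show r ^ n = r * r ^ n₀ by rw [hn, pow_succ]; ring, map_lsmul_mul]
          exact Submodule.map_mono (map_lsmul_le _ _)
  · right
    refine ⟨n, ?_⟩
    rw [Submodule.eq_bot_iff]
    rintro x ⟨y, hy, rfl⟩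
    have hyker : y ∈ LinearMap.ker (LinearMap.lsmul R M (r ^ n)) := by
      have : y ∈ S ⊓ LinearMap.ker (LinearMap.lsmul R M (r ^ n)) := h2.symm ▸ hy
      exact this.2
    simpa using hyker

/-- Every submodule of an Artinian module is a finite sup of secondary submodules. -/
lemma exists_sec_decomp [IsArtinian R M] (X : Submodule R M) :
    ∃ s : Finset (Submodule R M), (∀ T ∈ s, IsSec R T) ∧ s.sup id = X := by
  classical
  induction X using WellFoundedLT.induction with
  | _ X IH =>
    by_cases hbot : X = ⊥
    · exact ⟨∅, by simp, by simp [hbot]⟩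
    by_cases hirr : ∀ A B : Submodule R M, A ⊔ B = X → A = X ∨ B = X
    · exact ⟨{X}, by simpa using isSec_of_irred X hbot hirr, by simp⟩
    · push_neg at hirr
      obtain ⟨A, B, hAB, hA, hB⟩ := hirr
      have hAX : A < X := lt_of_le_of_ne (hAB ▸ le_sup_left) hA
      have hBX : B < X := lt_of_le_of_ne (hAB ▸ le_sup_right) hB
      obtain ⟨sA, hsA, hsupA⟩ := IH A hAX
      obtain ⟨sB, hsB, hsupB⟩ := IH B hBX
      refine ⟨sA ∪ sB, ?_, ?_⟩
      · intro T hT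
        rcases Finset.mem_union.mp hT with h | h
        exacts [hsA T h, hsB T h]
      · rw [Finset.sup_union, hsupA, hsupB, hAB]

end AuxSec

section AuxMain

variable {R : Type*} [CommRing R] {M : Type*} [AddCommGroup M] [Module R M]

lemma mem_annS {S : Submodule R M} {r : R} :
    r ∈ Module.annihilator R S ↔ ∀ x ∈ S, r • x = 0 := by
  rw [Module.mem_annihilator]
  constructor
  · intro h x hx
    have := congrArg Subtype.val (h ⟨x, hx⟩)
    simpa using this
  · intro h m
    ext
    simpa using h m.1 m.2

lemma prod_ann_le_ann_sup (s : Finset (Submodule R M)) :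
    (∏ T ∈ s, Module.annihilator R T) ≤ Module.annihilator R (s.sup id : Submodule R M) := by
  classical
  induction s using Finset.cons_induction with
  | empty =>
      intro r _
      rw [mem_annS]
      intro x hx
      simp only [Finset.sup_empty, Submodule.mem_bot] at hx
      rw [hx, smul_zero]
  | cons a s ha IH =>
      rw [Finset.prod_cons, Finset.sup_cons]
      refine le_trans (le_trans Ideal.mul_le_inf (inf_le_inf_left _ IH)) ?_
      intro r hr
      rw [mem_annS]
      intro x hx
      obtain ⟨y, hy, z, hz, rfl⟩ := Submodule.mem_sup.mp hx
      rw [smul_add, mem_annS.mp hr.1 y hy, mem_annS.mp hr.2 z hz, add_zero]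

/-- Key lemma: over a Noetherian ring, a prime containing the annihilator of a nonzero Artinian
module contains an attached prime of that module. -/
lemma exists_attached_le [IsNoetherianRing R] [IsArtinian R M] {q : Ideal R} (hq : q.IsPrime)
    (hle : Module.annihilator R M ≤ q) :
    ∃ q₀, IsAttachedPrime R M q₀ ∧ q₀ ≤ q := by
  classical
  obtain ⟨s, hsec, hsup⟩ := exists_sec_decomp (⊤ : Submodule R M)
  suffices H : ∀ n (s : Finset (Submodule R M)), s.card = n → (∀ T ∈ s, IsSec R T) →
      s.sup id = ⊤ → ∃ q₀, IsAttachedPrime R M q₀ ∧ q₀ ≤ q by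
    exact H s.card s rfl hsec hsup
  intro n
  induction n using Nat.strong_induction_on with
  | _ n IH =>
  intro s hcard hsec hsup
  -- the product of the annihilators of the components is contained in `q`
  have hprodle : (∏ T ∈ s, Module.annihilator R T) ≤ q := by
    refine le_trans (prod_ann_le_ann_sup s) (le_trans ?_ hle)
    rw [hsup]
    intro r hr
    rw [Module.mem_annihilator]
    intro x
    exact mem_annS.mp hr x Submodule.mem_top
  obtain ⟨T₀, hT₀s, hT₀le⟩ := (Ideal.IsPrime.prod_le hq).mp hprodle
  set rest : Finset (Submodule R M) := s.erase T₀ with hrest_def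
  by_cases hrest : rest.sup id = ⊤
  · exact IH rest.card (by rw [← hcard]; exact Finset.card_erase_lt_of_mem hT₀s) rest rfl
      (fun T hT => hsec T (Finset.mem_of_mem_erase hT)) hrest
  · set Nr : Submodule R M := rest.sup id with hNr
    have hQnt : Nontrivial (M ⧸ Nr) :=
      Submodule.Quotient.nontrivial_iff.mpr hrest
    obtain ⟨P, hPprime, N', hN'⟩ := exists_isAttachedPrime (R := R) (M := M ⧸ Nr) hQnt
    have hsup' : T₀ ⊔ Nr = ⊤ := by
      have h1 := Finset.sup_insert (b := T₀) (s := s.erase T₀) (f := (id : Submodule R M → Submodule R M))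
      rw [Finset.insert_erase hT₀s, hsup] at h1
      exact h1.symm
    have hN'top : N' ≠ ⊤ := by
      intro hT
      apply hPprime.ne_top
      rw [← hN', Ideal.eq_top_iff_one, mem_ann_quot]
      intro x
      rw [hT]
      trivial
    -- every element of `P` fails to be surjective on `M ⧸ Nr`, hence is nilpotent on `T₀`
    have hPle : P ≤ q := by
      intro r hr
      have hns : ¬ (∀ z : M ⧸ Nr, ∃ w, r • w = z) := by
        intro hsurj
        apply hN'top
        rw [Submodule.eq_top_iff']
        intro z
        obtain ⟨w, hw⟩ := hsurj z
        have := mem_ann_quot.mp (hN' ▸ hr) w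
        rwa [hw] at this
      have hT : ¬ (T₀.map (LinearMap.lsmul R M r) = T₀) := by
        intro hT
        apply hns
        intro z
        obtain ⟨x, rfl⟩ := Submodule.Quotient.mk_surjective Nr z
        have hx : x ∈ T₀ ⊔ Nr := hsup' ▸ Submodule.mem_top
        obtain ⟨t, ht, u, hu, rfl⟩ := Submodule.mem_sup.mp hx
        rw [← hT] at ht
        obtain ⟨t', ht', htt⟩ := ht
        refine ⟨Submodule.Quotient.mk t', ?_⟩
        rw [← Submodule.Quotient.mk_smul]
        show Submodule.Quotient.mk (r • t') = Submodule.Quotient.mk (t + u)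
        have : (Submodule.Quotient.mk (r • t' - (t + u)) : M ⧸ Nr) = 0 := by
          rw [Submodule.Quotient.mk_eq_zero]
          have : r • t' = t := htt
          rw [this]
          simpa using Nr.neg_mem hu
        rwa [Submodule.Quotient.mk_sub, sub_eq_zero] at this
      rcases (hsec T₀ hT₀s).2 r with h | ⟨m, hm⟩
      · exact absurd h hT
      · have : r ^ m ∈ Module.annihilator R T₀ := by
          rw [mem_annS]
          intro x hx
          have : (r ^ m) • x ∈ T₀.map (LinearMap.lsmul R M (r ^ m)) := ⟨x, hx, rfl⟩
          rw [hm] at this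
          simpa using this
        exact hq.mem_of_pow_mem m (hT₀le this)
    -- transfer the attached prime of the quotient back to `M`
    set N'' : Submodule R M := N'.comap Nr.mkQ with hN''
    have hmap : N''.map Nr.mkQ = N' :=
      Submodule.map_comap_eq_of_surjective (Submodule.mkQ_surjective Nr) N'
    have hle'' : Nr ≤ N'' := by
      intro x hx
      show Nr.mkQ x ∈ N'
      rw [Submodule.mkQ_apply]
      rw [show (Submodule.Quotient.mk x : M ⧸ Nr) = 0 from (Submodule.Quotient.mk_eq_zero _).mpr hx]
      exact N'.zero_mem
    have e : ((M ⧸ Nr) ⧸ N') ≃ₗ[R] M ⧸ N'' := by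
      rw [← hmap]
      exact Submodule.quotientQuotientEquivQuotient Nr N'' hle''
    refine ⟨P, ⟨hPprime, N'', ?_⟩, hPle⟩
    rw [← annihilator_congr e, hN']

end AuxMain

section MainAux

variable {R : Type*} [CommRing R] {M : Type*} [AddCommGroup M] [Module R M]

/-- Any prime of the localization whose contraction contains `Ann M` must be `pR_p`, under the
hypothesis that every attached prime of `M` contained in `p` equals `p`. -/
lemma colocal_prime_eq [IsNoetherianRing R] [IsArtinian R M]
    (p : Ideal R) [hp : p.IsPrime]
    (hatt : ∀ q : Ideal R, IsAttachedPrime R M q → q ≤ p → q = p)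
    (P : Ideal (Localization.AtPrime p)) (hP : P.IsPrime)
    (hannP : Module.annihilator R M ≤ P.comap (algebraMap R (Localization.AtPrime p))) :
    P = p.map (algebraMap R (Localization.AtPrime p)) := by
  have hqprime : (P.comap (algebraMap R (Localization.AtPrime p))).IsPrime := hP.comap _
  have hPmax : P ≤ IsLocalRing.maximalIdeal (Localization.AtPrime p) :=
    IsLocalRing.le_maximalIdeal hP.ne_top
  have hqp : P.comap (algebraMap R (Localization.AtPrime p)) ≤ p := by
    refine le_trans (Ideal.comap_mono hPmax) ?_
    exact le_of_eq (Localization.AtPrime.under_maximalIdeal)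
  obtain ⟨q₀, hq₀att, hq₀le⟩ := exists_attached_le hqprime hannP
  have hq₀p : q₀ = p := hatt q₀ hq₀att (le_trans hq₀le hqp)
  have hqeq : P.comap (algebraMap R (Localization.AtPrime p)) = p :=
    le_antisymm hqp (hq₀p ▸ hq₀le)
  apply le_antisymm
  · rw [Localization.AtPrime.map_eq_maximalIdeal]
    exact hPmax
  · calc p.map (algebraMap R (Localization.AtPrime p))
        = (P.comap (algebraMap R (Localization.AtPrime p))).map
            (algebraMap R (Localization.AtPrime p)) := by rw [hqeq]
      _ ≤ P := Ideal.map_comap_le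

lemma smul_annihilator_colocal (p : Ideal R) [p.IsPrime] {r : R}
    (hr : r ∈ Module.annihilator R M) (f : Localization.AtPrime p →ₗ[R] M) :
    (algebraMap R (Localization.AtPrime p) r) • f = 0 := by
  apply LinearMap.ext
  intro x
  show f (algebraMap R (Localization.AtPrime p) r * x) = 0
  rw [← Algebra.smul_def, map_smul]
  exact Module.mem_annihilator.mp hr (f x)

end MainAux

/-- Let `R` be a Noetherian ring, `M` an Artinian `R`-module, and `p` a prime
in the co-support of `M`. If every attached prime of `M` contained in `p` equals `p`, then
`Att_{R_p}(Hom_R(R_p, M)) = {p R_p}` and the co-dimension of `Hom_R(R_p, M)` over `R_p` is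
zero. -/
theorem attached_primes_and_coDim_of_colocalization
    (R M : Type*) [CommRing R] [IsNoetherianRing R]
    [AddCommGroup M] [Module R M] [IsArtinian R M]
    (p : Ideal R) [hp : p.IsPrime]
    (hcos : (⟨p, hp⟩ : PrimeSpectrum R) ∈ coSupport R M)
    (hatt : ∀ q : Ideal R, IsAttachedPrime R M q → q ≤ p → q = p) :
    {P : Ideal (Localization.AtPrime p) |
        IsAttachedPrime (Localization.AtPrime p) (Localization.AtPrime p →ₗ[R] M) P}
      = {p.map (algebraMap R (Localization.AtPrime p))} ∧
    coDim (Localization.AtPrime p) (Localization.AtPrime p →ₗ[R] M) = 0 := by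
  haveI hRpNoeth : IsNoetherianRing (Localization.AtPrime p) :=
    IsLocalization.isNoetherianRing p.primeCompl (Localization.AtPrime p) ‹IsNoetherianRing R›
  have hHnt : Nontrivial (Localization.AtPrime p →ₗ[R] M) := hcos
  -- every attached prime of the co-localization is `pR_p`
  have hsubset : ∀ P : Ideal (Localization.AtPrime p),
      IsAttachedPrime (Localization.AtPrime p) (Localization.AtPrime p →ₗ[R] M) P →
      P = p.map (algebraMap R (Localization.AtPrime p)) := by
    intro P hPatt
    obtain ⟨hPprime, N, hN⟩ := hPatt
    refine colocal_prime_eq p hatt P hPprime ?_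
    intro r hr
    show algebraMap R (Localization.AtPrime p) r ∈ P
    rw [← hN, mem_ann_quot]
    intro f
    rw [smul_annihilator_colocal p hr f]
    exact N.zero_mem
  have hset : {P : Ideal (Localization.AtPrime p) |
      IsAttachedPrime (Localization.AtPrime p) (Localization.AtPrime p →ₗ[R] M) P}
      = {p.map (algebraMap R (Localization.AtPrime p))} := by
    apply Set.eq_singleton_iff_unique_mem.mpr
    constructor
    · obtain ⟨P, hP⟩ := exists_isAttachedPrime (R := Localization.AtPrime p) hHnt
      have := hsubset P hP
      rwa [this] at hP
    · intro P hP
      exact hsubset P hP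
  refine ⟨hset, ?_⟩
  -- the maximal ideal of the localization
  have hmaxmap : (p.map (algebraMap R (Localization.AtPrime p))).IsMaximal := by
    rw [Localization.AtPrime.map_eq_maximalIdeal]
    exact IsLocalRing.maximalIdeal.isMaximal _
  have hmapprime : (p.map (algebraMap R (Localization.AtPrime p))).IsPrime := hmaxmap.isPrime
  set pt : PrimeSpectrum (Localization.AtPrime p) :=
    ⟨p.map (algebraMap R (Localization.AtPrime p)), hmapprime⟩ with hpt
  -- the co-support of the co-localization is exactly the maximal ideal
  have hcosup : coSupport (Localization.AtPrime p) (Localization.AtPrime p →ₗ[R] M) = {pt} := by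
    apply Set.eq_singleton_iff_unique_mem.mpr
    constructor
    · -- the maximal ideal is in the co-support
      show Nontrivial (Localization.AtPrime pt.asIdeal →ₗ[Localization.AtPrime p]
        (Localization.AtPrime p →ₗ[R] M))
      have hunits : pt.asIdeal.primeCompl ≤ IsUnit.submonoid (Localization.AtPrime p) := by
        intro x hx
        show IsUnit x
        by_contra hnu
        apply hx
        show x ∈ pt.asIdeal
        rw [hpt]
        show x ∈ p.map (algebraMap R (Localization.AtPrime p))
        rw [Localization.AtPrime.map_eq_maximalIdeal]
        exact hnu
      set e : Localization.AtPrime p ≃ₐ[Localization.AtPrime p] Localization.AtPrime pt.asIdeal :=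
        IsLocalization.atUnits (Localization.AtPrime p) pt.asIdeal.primeCompl hunits with he
      obtain ⟨h0, hh0⟩ := exists_ne (0 : Localization.AtPrime p →ₗ[R] M)
      set φ : Localization.AtPrime pt.asIdeal →ₗ[Localization.AtPrime p]
          (Localization.AtPrime p →ₗ[R] M) :=
        (LinearMap.toSpanSingleton (Localization.AtPrime p) _ h0).comp e.symm.toLinearMap with hφ
      refine ⟨φ, 0, fun hc => hh0 ?_⟩
      have h1 : φ (e 1) = h0 := by
        rw [hφ]
        simp [LinearMap.toSpanSingleton_apply]
      rw [hc] at h1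
      simpa using h1.symm
    · -- uniqueness
      intro P hP
      have hPnt : Nontrivial (Localization.AtPrime P.asIdeal →ₗ[Localization.AtPrime p]
        (Localization.AtPrime p →ₗ[R] M)) := hP
      have hPeq : P.asIdeal = p.map (algebraMap R (Localization.AtPrime p)) := by
        refine colocal_prime_eq p hatt P.asIdeal P.isPrime ?_
        intro r hr
        show algebraMap R (Localization.AtPrime p) r ∈ P.asIdeal
        by_contra hnmem
        obtain ⟨g₁, g₂, hg⟩ := hPnt
        have hgne : g₁ - g₂ ≠ 0 := sub_ne_zero_of_ne hg
        obtain ⟨x, hgx⟩ : ∃ x, (g₁ - g₂) x ≠ 0 := by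
          by_contra hall
          push_neg at hall
          exact hgne (LinearMap.ext hall)
        set s : Localization.AtPrime p := algebraMap R (Localization.AtPrime p) r with hs
        have hsunit : IsUnit (algebraMap (Localization.AtPrime p)
            (Localization.AtPrime P.asIdeal) s) :=
          IsLocalization.map_units (Localization.AtPrime P.asIdeal)
            (⟨s, hnmem⟩ : P.asIdeal.primeCompl)
        obtain ⟨u, hu⟩ := hsunit
        apply hgx
        have hx : x = s • ((↑u⁻¹ : Localization.AtPrime P.asIdeal) * x) := by
          rw [Algebra.smul_def, ← hu, ← mul_assoc, Units.mul_inv, one_mul]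
        rw [hx, map_smul, hs, smul_annihilator_colocal p hr]
      apply PrimeSpectrum.ext
      rw [hPeq, hpt]
  -- conclude the co-dimension computation
  rw [coDim, hcosup]
  erw [Set.image_singleton, sSup_singleton]
  haveI : (pt.asIdeal).IsMaximal := hmaxmap
  letI : Field (Localization.AtPrime p ⧸ pt.asIdeal) := Ideal.Quotient.field _
  exact ringKrullDim_eq_zero_of_field _
end
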